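/- For every even integer k ≥ 4, the Möbius ladder M_k with k rungs is cycle-conformal: M_k has a perfect matching, and for every even cycle C in M_k, the graph M_k - V(C) has a perfect matching. -/

import Mathlib

open SimpleGraph
open Fin.NatCast

/-- A graph has a perfect matching. -/
def hasPM {V : Type*} (G : SimpleGraph V) : Prop :=
  ∃ M : G.Subgraph, M.IsPerfectMatching

/-- The graph obtained from `G` by deleting the vertices in `s`. -/
def delVerts {V : Type*} (G : SimpleGraph V) (s : Set V) : SimpleGraph ↥(sᶜ) :=
  G.induce sᶜ

/-- A graph is cycle-conformal if it has a perfect matching and deleting the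
vertex set of any even cycle leaves a graph with a perfect matching. -/
def cycleConformal {V : Type*} (G : SimpleGraph V) : Prop :=
  hasPM G ∧ ∀ (v : V) (c : G.Walk v v), c.IsCycle → Even c.length →
    hasPM (delVerts G {x | x ∈ c.support})

/-- The ladder `L_k`: vertices `u i = Sum.inl i` and `v i = Sum.inr i` for
`i : Fin k`, with edges `uᵢuᵢ₊₁`, `vᵢvᵢ₊₁` and rungs `uᵢvᵢ`. -/
def ladder (k : ℕ) : SimpleGraph (Fin k ⊕ Fin k) :=
  SimpleGraph.fromRel (fun a b =>
    (∃ i j : Fin k, (i : ℕ) + 1 = (j : ℕ) ∧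
      ((a = Sum.inl i ∧ b = Sum.inl j) ∨ (a = Sum.inr i ∧ b = Sum.inr j))) ∨
    (∃ i : Fin k, a = Sum.inl i ∧ b = Sum.inr i))

/-- The Möbius ladder `M_k`: the ladder `L_k` together with the two extra
edges `u₁v_k` and `v₁u_k`. -/
def mobiusLadder (k : ℕ) : SimpleGraph (Fin k ⊕ Fin k) :=
  SimpleGraph.fromRel (fun a b =>
    (∃ i j : Fin k, (i : ℕ) + 1 = (j : ℕ) ∧
      ((a = Sum.inl i ∧ b = Sum.inl j) ∨ (a = Sum.inr i ∧ b = Sum.inr j))) ∨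
    (∃ i : Fin k, a = Sum.inl i ∧ b = Sum.inr i) ∨
    (∃ i j : Fin k, (i : ℕ) = 0 ∧ (j : ℕ) = k - 1 ∧
      ((a = Sum.inl i ∧ b = Sum.inr j) ∨ (a = Sum.inr i ∧ b = Sum.inl j))))

/-! ### Auxiliary general lemmas about cycles -/

section General
variable {V : Type*} {G : SimpleGraph V}

theorem path_adj_end {u v y : V} {q : G.Walk u v} (hq : q.IsPath)
    (hy : q.toSubgraph.Adj v y) : y = q.getVert (q.length - 1) ∧ 1 ≤ q.length := by
  induction q with
  | nil => simp [Walk.toSubgraph] at hy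
  | @cons a b c h q' ih =>
    rw [Walk.toSubgraph] at hy
    rcases hy with hy | hy
    · rw [subgraphOfAdj_adj, Sym2.eq_iff] at hy
      rcases hy with ⟨h1, h2⟩ | ⟨h1, h2⟩
      · exfalso
        have hmem : c ∈ q'.support := q'.end_mem_support
        have hne : a ∉ q'.support := ((Walk.cons_isPath_iff h q').mp hq).2
        subst h1
        exact hne hmem
      · subst h1
        subst h2
        have : q' = Walk.nil := Walk.isPath_iff_eq_nil.mp hq.of_cons
        subst this
        simp
    · obtain ⟨h1, h2⟩ := ih hq.of_cons hy
      constructor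
      · rw [Walk.length_cons, Nat.add_sub_cancel, h1]
        obtain ⟨m, hm⟩ : ∃ m, q'.length = m + 1 := ⟨q'.length - 1, by omega⟩
        rw [hm]
        simp only [Nat.add_sub_cancel]
        rw [Walk.getVert_cons_succ]
      · rw [Walk.length_cons]; omega

theorem walk_edge_mem_edges {u v : V} (q : G.Walk u v) {i : ℕ} (hi : i < q.length) :
    s(q.getVert i, q.getVert (i + 1)) ∈ q.edges := by
  have := q.toSubgraph_adj_getVert hi
  rw [← Subgraph.mem_edgeSet, Walk.edgeSet_toSubgraph] at this
  exact this

theorem cycle_start_nbrs_ne {v : V} {c : G.Walk v v} (hc : c.IsCycle) :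
    c.getVert 1 ≠ c.getVert (c.length - 1) := by
  have h3 : 3 ≤ c.length := hc.three_le_length
  cases c with
  | nil => simp at h3
  | @cons _ w _ h q =>
    rw [Walk.cons_isCycle_iff] at hc
    intro heq
    apply hc.2
    have hq1 : 1 ≤ q.length := by
      rw [Walk.length_cons] at h3; omega
    have : s(q.getVert (q.length - 1), q.getVert (q.length - 1 + 1)) ∈ q.edges :=
      walk_edge_mem_edges q (by omega)
    rw [show q.length - 1 + 1 = q.length by omega, Walk.getVert_length] at this
    have hv1 : (Walk.cons h q).getVert 1 = w := by
      rw [Walk.getVert_cons_succ, Walk.getVert_zero]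
    have hv2 : (Walk.cons h q).getVert ((Walk.cons h q).length - 1) = q.getVert (q.length - 1) := by
      rw [Walk.length_cons, Nat.add_sub_cancel]
      obtain ⟨m, hm⟩ : ∃ m, q.length = m + 1 := ⟨q.length - 1, by omega⟩
      rw [hm]; simp only [Nat.add_sub_cancel]; rw [Walk.getVert_cons_succ]
    rw [hv1, hv2] at heq
    rw [← heq] at this
    rwa [Sym2.eq_swap] at this

theorem cycle_adj_start {v y : V} {c : G.Walk v v} (hc : c.IsCycle) :
    c.toSubgraph.Adj v y ↔ (y = c.getVert 1 ∨ y = c.getVert (c.length - 1)) := by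
  have h3 : 3 ≤ c.length := hc.three_le_length
  cases c with
  | nil => simp at h3
  | @cons _ w _ h q =>
    rw [Walk.cons_isCycle_iff] at hc
    have hq1 : 1 ≤ q.length := by rw [Walk.length_cons] at h3; omega
    have hv1 : (Walk.cons h q).getVert 1 = w := by
      rw [Walk.getVert_cons_succ, Walk.getVert_zero]
    have hv2 : (Walk.cons h q).getVert ((Walk.cons h q).length - 1) = q.getVert (q.length - 1) := by
      rw [Walk.length_cons, Nat.add_sub_cancel]
      obtain ⟨m, hm⟩ : ∃ m, q.length = m + 1 := ⟨q.length - 1, by omega⟩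
      rw [hm]; simp only [Nat.add_sub_cancel]; rw [Walk.getVert_cons_succ]
    rw [hv1, hv2]
    constructor
    · intro hy
      rw [Walk.toSubgraph] at hy
      rcases hy with hy | hy
      · rw [subgraphOfAdj_adj, Sym2.eq_iff] at hy
        rcases hy with ⟨h1, h2⟩ | ⟨h1, h2⟩
        · exact Or.inl h2.symm
        · exact absurd h2.symm h.ne
      · exact Or.inr (path_adj_end hc.1 hy).1
    · intro hy
      rcases hy with hy | hy
      · subst hy
        rw [Walk.toSubgraph]
        exact Or.inl (by simp)
      · subst hy
        rw [Walk.toSubgraph]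
        right
        have := q.toSubgraph_adj_getVert (show q.length - 1 < q.length by omega)
        rw [show q.length - 1 + 1 = q.length by omega, Walk.getVert_length] at this
        exact this.symm

theorem cycle_two_nbrs [DecidableEq V] {v x : V} {c : G.Walk v v} (hc : c.IsCycle)
    (hx : x ∈ c.support) :
    ∃ p q : V, p ≠ q ∧ ∀ y, c.toSubgraph.Adj x y ↔ (y = p ∨ y = q) := by
  have hrot : (c.rotate x hx).toSubgraph = c.toSubgraph := c.toSubgraph_rotate hx
  have hc' : (c.rotate x hx).IsCycle := hc.rotate hx
  refine ⟨(c.rotate x hx).getVert 1, (c.rotate x hx).getVert ((c.rotate x hx).length - 1),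
    cycle_start_nbrs_ne hc', fun y => ?_⟩
  rw [← hrot]
  exact cycle_adj_start hc'

theorem cycle_card_support {v : V} [DecidableEq V] {c : G.Walk v v} (hc : c.IsCycle) :
    c.support.toFinset.card = c.length := by
  have hnil : ¬ c.Nil := hc.not_nil
  have htail : c.support.tail = c.darts.map (·.snd) := (Walk.map_snd_darts c).symm
  have hdne : c.darts ≠ [] := by
    intro h
    have := c.length_darts
    rw [h] at this
    have h3 := hc.three_le_length
    simp at this; omega
  have hvmem : v ∈ c.support.tail := by
    rw [htail]
    exact List.mem_map.mpr ⟨c.darts.getLast hdne, List.getLast_mem hdne, by rw [c.getLast_darts_eq_lastDart hdne]; rfl⟩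
  have hsupp : c.support = v :: c.support.tail := by
    rw [← Walk.support_eq_cons]
  have : c.support.toFinset = c.support.tail.toFinset := by
    rw [hsupp]
    simp only [List.toFinset_cons]
    exact Finset.insert_eq_self.mpr (List.mem_toFinset.mpr hvmem)
  rw [this, List.toFinset_card_of_nodup hc.support_nodup]
  have h2 := c.length_support
  rw [hsupp] at h2
  simpa using h2

end General

/-! ### Indicator of a proposition -/

open Classical in
noncomputable def pind (P : Prop) : ℕ := if P then 1 else 0

lemma pind_pos {P : Prop} (h : P) : pind P = 1 := if_pos h
lemma pind_neg {P : Prop} (h : ¬ P) : pind P = 0 := if_neg h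
lemma pind_le_one (P : Prop) : pind P ≤ 1 := by
  by_cases h : P
  · rw [pind_pos h]
  · rw [pind_neg h]; omega
lemma pind_eq_one_iff {P : Prop} : pind P = 1 ↔ P := by
  by_cases h : P
  · rw [pind_pos h]; simpa using h
  · rw [pind_neg h]; simpa using h
lemma pind_congr {P Q : Prop} (h : P ↔ Q) : pind P = pind Q := by
  by_cases hp : P
  · rw [pind_pos hp, pind_pos (h.mp hp)]
  · rw [pind_neg hp, pind_neg (fun q => hp (h.mpr q))]

/-! ### Mod arithmetic helpers -/

lemma mod_succ_of_lt {i k : ℕ} (h : i % k + 1 < k) : (i + 1) % k = i % k + 1 := by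
  have hk : 0 < k := by omega
  conv_lhs => rw [show i + 1 = k * (i / k) + (i % k + 1) by
    have := Nat.div_add_mod i k; omega]
  rw [Nat.mul_add_mod]
  exact Nat.mod_eq_of_lt h

lemma mod_succ_of_eq {i k : ℕ} (hk : 0 < k) (h : i % k + 1 = k) : (i + 1) % k = 0 := by
  conv_lhs => rw [show i + 1 = k * (i / k) + k by
    have := Nat.div_add_mod i k; omega]
  rw [Nat.mul_add_mod, Nat.mod_self]

lemma mod_pred {i k : ℕ} (hk : 0 < k) (h : i % k ≠ 0) : (i - 1) % k = i % k - 1 := by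
  have h2 : i % k < k := Nat.mod_lt i hk
  conv_lhs => rw [show i - 1 = k * (i / k) + (i % k - 1) by
    have := Nat.div_add_mod i k; omega]
  rw [Nat.mul_add_mod]
  exact Nat.mod_eq_of_lt (by omega)

/-! ### Vertices and edges of the Möbius ladder -/

section MobDefs
variable (k : ℕ) [NeZero k]

/-- top vertex of column `i` (mod `k`). -/
abbrev uu (i : ℕ) : Fin k ⊕ Fin k := Sum.inl (i : Fin k)
/-- bottom vertex of column `i` (mod `k`). -/
abbrev vv (i : ℕ) : Fin k ⊕ Fin k := Sum.inr (i : Fin k)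

/-- the right-hand neighbour of the top vertex `uu i`. -/
def tN (i : ℕ) : Fin k ⊕ Fin k := if (i % k) + 1 < k then uu k (i+1) else vv k (i+1)
/-- the right-hand neighbour of the bottom vertex `vv i`. -/
def bN (i : ℕ) : Fin k ⊕ Fin k := if (i % k) + 1 < k then vv k (i+1) else uu k (i+1)
/-- the left-hand neighbour of `uu i`. -/
def tP (i : ℕ) : Fin k ⊕ Fin k := if i % k = 0 then vv k (k-1) else uu k (i-1)
/-- the left-hand neighbour of `vv i`. -/
def bP (i : ℕ) : Fin k ⊕ Fin k := if i % k = 0 then uu k (k-1) else vv k (i-1)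

end MobDefs

section MobAdj

variable {k : ℕ} [NeZero k]

lemma fin_cast_val (i : ℕ) : ((i : Fin k) : ℕ) = i % k := Fin.val_natCast i k

lemma uu_eq_iff {i j : ℕ} : uu k i = uu k j ↔ i % k = j % k := by
  rw [Sum.inl.injEq, Fin.ext_iff, fin_cast_val, fin_cast_val]

lemma vv_eq_iff {i j : ℕ} : vv k i = vv k j ↔ i % k = j % k := by
  rw [Sum.inr.injEq, Fin.ext_iff, fin_cast_val, fin_cast_val]

lemma adj_enum_u (hk : 4 ≤ k) (i : ℕ) (x : Fin k ⊕ Fin k)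
    (hadj : (mobiusLadder k).Adj (uu k i) x) : x = vv k i ∨ x = tN k i ∨ x = tP k i := by
  rw [mobiusLadder, fromRel_adj] at hadj
  obtain ⟨hne, hrel⟩ := hadj
  have hik : i % k < k := Nat.mod_lt i (by omega)
  rcases hrel with (⟨i0, j0, hij, (⟨h1, h2⟩ | ⟨h1, h2⟩)⟩ | ⟨i0, h1, h2⟩ |
      ⟨i0, j0, hi0, hj0, (⟨h1, h2⟩ | ⟨h1, h2⟩)⟩) |
    (⟨i0, j0, hij, (⟨h1, h2⟩ | ⟨h1, h2⟩)⟩ | ⟨i0, h1, h2⟩ |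
      ⟨i0, j0, hi0, hj0, (⟨h1, h2⟩ | ⟨h1, h2⟩)⟩)
  · -- uu i = inl i0, x = inl j0, i0+1 = j0 : right neighbour, interior
    right; left
    rw [Sum.inl.injEq] at h1
    subst h2
    have hi0v : (i0 : ℕ) = i % k := by rw [← h1, fin_cast_val]
    have hlt : (i % k) + 1 < k := by rw [← hi0v, hij]; exact j0.isLt
    rw [tN, if_pos hlt, Sum.inl.injEq]
    apply Fin.ext
    rw [fin_cast_val, mod_succ_of_lt hlt]
    omega
  · simp at h1
  · -- rung : uu i = inl i0, x = inr i0
    left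
    rw [Sum.inl.injEq] at h1
    subst h2
    rw [Sum.inr.injEq]
    exact h1.symm
  · -- cross : uu i = inl i0 (i0 = 0), x = inr j0 (j0 = k-1) : left neighbour of uu 0
    right; right
    rw [Sum.inl.injEq] at h1
    subst h2
    have hi0v : (i0 : ℕ) = i % k := by rw [← h1, fin_cast_val]
    rw [tP, if_pos (by omega), Sum.inr.injEq]
    apply Fin.ext
    rw [fin_cast_val, hj0, Nat.mod_eq_of_lt (by omega)]
  · simp at h1
  · -- x = inl i0, uu i = inl j0, i0+1 = j0 : left neighbour, interior
    right; right
    rw [Sum.inl.injEq] at h2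
    subst h1
    have hj0v : (j0 : ℕ) = i % k := by rw [← h2, fin_cast_val]
    have hne0 : i % k ≠ 0 := by
      have := i0.isLt; omega
    rw [tP, if_neg hne0, Sum.inl.injEq]
    apply Fin.ext
    rw [fin_cast_val, mod_pred (by omega) hne0]
    omega
  · simp at h2
  · simp at h2
  · simp at h2
  · -- cross : x = inr i0 (i0 = 0), uu i = inl j0 (j0 = k-1) : right neighbour of uu (k-1)
    right; left
    rw [Sum.inl.injEq] at h2
    subst h1
    have hj0v : (j0 : ℕ) = i % k := by rw [← h2, fin_cast_val]
    rw [tN, if_neg (by omega), Sum.inr.injEq]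
    apply Fin.ext
    rw [fin_cast_val, hi0, mod_succ_of_eq (by omega) (by omega)]

lemma adj_enum_v (hk : 4 ≤ k) (i : ℕ) (x : Fin k ⊕ Fin k)
    (hadj : (mobiusLadder k).Adj (vv k i) x) : x = uu k i ∨ x = bN k i ∨ x = bP k i := by
  rw [mobiusLadder, fromRel_adj] at hadj
  obtain ⟨hne, hrel⟩ := hadj
  have hik : i % k < k := Nat.mod_lt i (by omega)
  rcases hrel with (⟨i0, j0, hij, (⟨h1, h2⟩ | ⟨h1, h2⟩)⟩ | ⟨i0, h1, h2⟩ |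
      ⟨i0, j0, hi0, hj0, (⟨h1, h2⟩ | ⟨h1, h2⟩)⟩) |
    (⟨i0, j0, hij, (⟨h1, h2⟩ | ⟨h1, h2⟩)⟩ | ⟨i0, h1, h2⟩ |
      ⟨i0, j0, hi0, hj0, (⟨h1, h2⟩ | ⟨h1, h2⟩)⟩)
  · simp at h1
  · -- vv i = inr i0, x = inr j0, i0+1 = j0 : right neighbour, interior
    right; left
    rw [Sum.inr.injEq] at h1
    subst h2
    have hi0v : (i0 : ℕ) = i % k := by rw [← h1, fin_cast_val]
    have hlt : (i % k) + 1 < k := by rw [← hi0v, hij]; exact j0.isLt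
    rw [bN, if_pos hlt, Sum.inr.injEq]
    apply Fin.ext
    rw [fin_cast_val, mod_succ_of_lt hlt]
    omega
  · simp at h1
  · simp at h1
  · -- cross : vv i = inr i0 (i0 = 0), x = inl j0 (j0 = k-1) : left neighbour of vv 0
    right; right
    rw [Sum.inr.injEq] at h1
    subst h2
    have hi0v : (i0 : ℕ) = i % k := by rw [← h1, fin_cast_val]
    rw [bP, if_pos (by omega), Sum.inl.injEq]
    apply Fin.ext
    rw [fin_cast_val, hj0, Nat.mod_eq_of_lt (by omega)]
  · simp at h2
  · -- x = inr i0, vv i = inr j0, i0+1 = j0 : left neighbour, interior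
    right; right
    rw [Sum.inr.injEq] at h2
    subst h1
    have hj0v : (j0 : ℕ) = i % k := by rw [← h2, fin_cast_val]
    have hne0 : i % k ≠ 0 := by
      have := i0.isLt; omega
    rw [bP, if_neg hne0, Sum.inr.injEq]
    apply Fin.ext
    rw [fin_cast_val, mod_pred (by omega) hne0]
    omega
  · -- rung reversed : x = inl i0, vv i = inr i0 : x = uu i
    left
    rw [Sum.inr.injEq] at h2
    subst h1
    rw [Sum.inl.injEq]
    exact h2.symm
  · -- cross : x = inl i0 (i0 = 0), vv i = inr j0 (j0 = k-1) : right neighbour of vv (k-1)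
    right; left
    rw [Sum.inr.injEq] at h2
    subst h1
    have hj0v : (j0 : ℕ) = i % k := by rw [← h2, fin_cast_val]
    rw [bN, if_neg (by omega), Sum.inl.injEq]
    apply Fin.ext
    rw [fin_cast_val, hi0, mod_succ_of_eq (by omega) (by omega)]
  · simp at h2

end MobAdj


/-! ### Analysis of a cycle in the Möbius ladder -/

section CycleAnalysis

variable {k : ℕ} [NeZero k]

/-- the top boundary-`i` edge is used by `H`. -/
def Tp (H : (mobiusLadder k).Subgraph) (i : ℕ) : Prop := H.Adj (uu k i) (tN k i)
/-- the bottom boundary-`i` edge is used by `H`. -/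
def Bp (H : (mobiusLadder k).Subgraph) (i : ℕ) : Prop := H.Adj (vv k i) (bN k i)
/-- the rung at column `i` is used by `H`. -/
def Rp (H : (mobiusLadder k).Subgraph) (i : ℕ) : Prop := H.Adj (uu k i) (vv k i)

lemma uu_add_k (i : ℕ) : uu k (i + k) = uu k i := by
  rw [uu_eq_iff, Nat.add_mod_right]

lemma vv_add_k (i : ℕ) : vv k (i + k) = vv k i := by
  rw [vv_eq_iff, Nat.add_mod_right]

lemma tN_add_k (i : ℕ) : tN k (i + k) = tN k i := by
  rw [tN, tN, Nat.add_mod_right, show i + k + 1 = (i+1) + k by ring, uu_add_k, vv_add_k]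

lemma bN_add_k (i : ℕ) : bN k (i + k) = bN k i := by
  rw [bN, bN, Nat.add_mod_right, show i + k + 1 = (i+1) + k by ring, uu_add_k, vv_add_k]

lemma Tp_add_k (H : (mobiusLadder k).Subgraph) (i : ℕ) : Tp H (i + k) = Tp H i := by
  rw [Tp, Tp, uu_add_k, tN_add_k]

lemma Bp_add_k (H : (mobiusLadder k).Subgraph) (i : ℕ) : Bp H (i + k) = Bp H i := by
  rw [Bp, Bp, vv_add_k, bN_add_k]

lemma Rp_add_k (H : (mobiusLadder k).Subgraph) (i : ℕ) : Rp H (i + k) = Rp H i := by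
  rw [Rp, Rp, uu_add_k, vv_add_k]

lemma tP_succ (hk : 4 ≤ k) (i : ℕ) :
    tP k (i+1) = if (i % k) + 1 < k then uu k i else vv k i := by
  have hik : i % k < k := Nat.mod_lt i (by omega)
  rw [tP]
  by_cases h : (i % k) + 1 < k
  · rw [if_pos h, if_neg (by rw [mod_succ_of_lt h]; omega)]
    simp
  · rw [if_neg h, if_pos (by rw [mod_succ_of_eq (by omega) (by omega)]),
      vv_eq_iff, Nat.mod_eq_of_lt (show k - 1 < k by omega)]
    omega
lemma bP_succ (hk : 4 ≤ k) (i : ℕ) :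
    bP k (i+1) = if (i % k) + 1 < k then vv k i else uu k i := by
  have hik : i % k < k := Nat.mod_lt i (by omega)
  rw [bP]
  by_cases h : (i % k) + 1 < k
  · rw [if_pos h, if_neg (by rw [mod_succ_of_lt h]; omega)]
    simp
  · rw [if_neg h, if_pos (by rw [mod_succ_of_eq (by omega) (by omega)]),
      uu_eq_iff, Nat.mod_eq_of_lt (show k - 1 < k by omega)]
    omega

lemma nbr_distinct_u (hk : 4 ≤ k) (m : ℕ) :
    vv k m ≠ tN k m ∧ vv k m ≠ tP k m ∧ tN k m ≠ tP k m := by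
  have hik : m % k < k := Nat.mod_lt m (by omega)
  rw [tN, tP]
  refine ⟨?_, ?_, ?_⟩
  · by_cases h : (m % k) + 1 < k
    · rw [if_pos h]; simp
    · rw [if_neg h]
      intro heq
      rw [vv_eq_iff, mod_succ_of_eq (by omega) (by omega)] at heq
      omega
  · by_cases h : m % k = 0
    · rw [if_pos h]
      intro heq
      rw [vv_eq_iff, Nat.mod_eq_of_lt (show k - 1 < k by omega)] at heq
      omega
    · rw [if_neg h]; simp
  · by_cases h : (m % k) + 1 < k
    · by_cases h0 : m % k = 0
      · rw [if_pos h, if_pos h0]; simp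
      · rw [if_pos h, if_neg h0]
        intro heq
        rw [uu_eq_iff, mod_succ_of_lt h, mod_pred (by omega) h0] at heq
        omega
    · by_cases h0 : m % k = 0
      · omega
      · rw [if_neg h, if_neg h0]; simp

lemma nbr_distinct_v (hk : 4 ≤ k) (m : ℕ) :
    uu k m ≠ bN k m ∧ uu k m ≠ bP k m ∧ bN k m ≠ bP k m := by
  have hik : m % k < k := Nat.mod_lt m (by omega)
  rw [bN, bP]
  refine ⟨?_, ?_, ?_⟩
  · by_cases h : (m % k) + 1 < k
    · rw [if_pos h]; simp
    · rw [if_neg h]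
      intro heq
      rw [uu_eq_iff, mod_succ_of_eq (by omega) (by omega)] at heq
      omega
  · by_cases h : m % k = 0
    · rw [if_pos h]
      intro heq
      rw [uu_eq_iff, Nat.mod_eq_of_lt (show k - 1 < k by omega)] at heq
      omega
    · rw [if_neg h]; simp
  · by_cases h : (m % k) + 1 < k
    · by_cases h0 : m % k = 0
      · rw [if_pos h, if_pos h0]; simp
      · rw [if_pos h, if_neg h0]
        intro heq
        rw [vv_eq_iff, mod_succ_of_lt h, mod_pred (by omega) h0] at heq
        omega
    · by_cases h0 : m % k = 0
      · omega
      · rw [if_neg h, if_neg h0]; simp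

lemma three_two {α : Type*} {n1 n2 n3 p q : α}
    (h12 : n1 ≠ n2) (h13 : n1 ≠ n3) (h23 : n2 ≠ n3) (hpq : p ≠ q)
    (hp : p = n1 ∨ p = n2 ∨ p = n3) (hq : q = n1 ∨ q = n2 ∨ q = n3) :
    pind (n1 = p ∨ n1 = q) + pind (n2 = p ∨ n2 = q) + pind (n3 = p ∨ n3 = q) = 2 := by
  rcases hp with hp1 | hp1 | hp1 <;> rcases hq with hq1 | hq1 | hq1 <;>
    subst hp1 <;> subst hq1
  · exact absurd rfl hpq
  · rw [pind_pos (Or.inl rfl), pind_pos (Or.inr rfl),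
      pind_neg (by rintro (h | h); exacts [h13 h.symm, h23 h.symm])]
  · rw [pind_pos (Or.inl rfl),
      pind_neg (by rintro (h | h); exacts [h12 h.symm, h23 h]),
      pind_pos (Or.inr rfl)]
  · rw [pind_pos (Or.inr rfl), pind_pos (Or.inl rfl),
      pind_neg (by rintro (h | h); exacts [h23 h.symm, h13 h.symm])]
  · exact absurd rfl hpq
  · rw [pind_neg (by rintro (h | h); exacts [h12 h, h13 h]),
      pind_pos (Or.inl rfl), pind_pos (Or.inr rfl)]
  · rw [pind_pos (Or.inr rfl),
      pind_neg (by rintro (h | h); exacts [h23 h, h12 h.symm]),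
      pind_pos (Or.inl rfl)]
  · rw [pind_neg (by rintro (h | h); exacts [h13 h, h12 h]),
      pind_pos (Or.inr rfl), pind_pos (Or.inl rfl)]
  · exact absurd rfl hpq

end CycleAnalysis


section CycleLocal

variable {k : ℕ} [NeZero k] {v : Fin k ⊕ Fin k} {c : (mobiusLadder k).Walk v v}

lemma mid_iff_u (hk : 4 ≤ k) (H : (mobiusLadder k).Subgraph) (i : ℕ) :
    (if (i % k) + 1 < k then Tp H i else Bp H i) ↔ H.Adj (uu k (i+1)) (tP k (i+1)) := by
  rw [tP_succ hk]
  by_cases h : (i % k) + 1 < k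
  · rw [if_pos h, if_pos h]
    have htN : tN k i = uu k (i+1) := by rw [tN, if_pos h]
    exact ⟨fun ht => by rw [Tp, htN] at ht; exact ht.symm,
      fun ht => by rw [Tp, htN]; exact ht.symm⟩
  · rw [if_neg h, if_neg h]
    have hbN : bN k i = uu k (i+1) := by rw [bN, if_neg h]
    exact ⟨fun ht => by rw [Bp, hbN] at ht; exact ht.symm,
      fun ht => by rw [Bp, hbN]; exact ht.symm⟩

lemma mid_iff_v (hk : 4 ≤ k) (H : (mobiusLadder k).Subgraph) (i : ℕ) :
    (if (i % k) + 1 < k then Bp H i else Tp H i) ↔ H.Adj (vv k (i+1)) (bP k (i+1)) := by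
  rw [bP_succ hk]
  by_cases h : (i % k) + 1 < k
  · rw [if_pos h, if_pos h]
    have hbN : bN k i = vv k (i+1) := by rw [bN, if_pos h]
    exact ⟨fun ht => by rw [Bp, hbN] at ht; exact ht.symm,
      fun ht => by rw [Bp, hbN]; exact ht.symm⟩
  · rw [if_neg h, if_neg h]
    have htN : tN k i = vv k (i+1) := by rw [tN, if_neg h]
    exact ⟨fun ht => by rw [Tp, htN] at ht; exact ht.symm,
      fun ht => by rw [Tp, htN]; exact ht.symm⟩

lemma local_u (hk : 4 ≤ k) (hc : c.IsCycle) (i : ℕ) :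
    pind (Tp c.toSubgraph (i+1)) +
      pind (if (i % k) + 1 < k then Tp c.toSubgraph i else Bp c.toSubgraph i) +
      pind (Rp c.toSubgraph (i+1)) = 2 * pind (uu k (i+1) ∈ c.toSubgraph.verts) := by
  classical
  set H := c.toSubgraph with hH
  rw [pind_congr (mid_iff_u hk H i)]
  by_cases hm : uu k (i+1) ∈ H.verts
  · rw [pind_pos hm, Nat.mul_one]
    have hx : uu k (i+1) ∈ c.support := by
      have := c.verts_toSubgraph ▸ hm
      exact this
    obtain ⟨p, q, hpq, hiff⟩ := cycle_two_nbrs hc hx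
    have hpmem : H.Adj (uu k (i+1)) p := (hiff p).mpr (Or.inl rfl)
    have hqmem : H.Adj (uu k (i+1)) q := (hiff q).mpr (Or.inr rfl)
    have hp3 := adj_enum_u hk (i+1) p hpmem.adj_sub
    have hq3 := adj_enum_u hk (i+1) q hqmem.adj_sub
    obtain ⟨d1, d2, d3⟩ := nbr_distinct_u hk (i+1)
    rw [Tp, Rp]
    rw [pind_congr (hiff (tN k (i+1))), pind_congr (hiff (tP k (i+1))),
      pind_congr (hiff (vv k (i+1)))]
    exact three_two d3 d1.symm d2.symm hpq (by tauto) (by tauto)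
  · rw [pind_neg hm, Nat.mul_zero]
    rw [Tp, Rp]
    rw [pind_neg (fun h => hm (Subgraph.Adj.fst_mem h)),
      pind_neg (fun h => hm (Subgraph.Adj.fst_mem h)),
      pind_neg (fun h => hm (Subgraph.Adj.fst_mem h))]

lemma local_v (hk : 4 ≤ k) (hc : c.IsCycle) (i : ℕ) :
    pind (Bp c.toSubgraph (i+1)) +
      pind (if (i % k) + 1 < k then Bp c.toSubgraph i else Tp c.toSubgraph i) +
      pind (Rp c.toSubgraph (i+1)) = 2 * pind (vv k (i+1) ∈ c.toSubgraph.verts) := by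
  classical
  set H := c.toSubgraph with hH
  rw [pind_congr (mid_iff_v hk H i)]
  have hRsymm : Rp H (i+1) ↔ H.Adj (vv k (i+1)) (uu k (i+1)) :=
    ⟨fun h => h.symm, fun h => h.symm⟩
  rw [pind_congr hRsymm]
  by_cases hm : vv k (i+1) ∈ H.verts
  · rw [pind_pos hm, Nat.mul_one]
    have hx : vv k (i+1) ∈ c.support := by
      have := c.verts_toSubgraph ▸ hm
      exact this
    obtain ⟨p, q, hpq, hiff⟩ := cycle_two_nbrs hc hx
    have hpmem : H.Adj (vv k (i+1)) p := (hiff p).mpr (Or.inl rfl)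
    have hqmem : H.Adj (vv k (i+1)) q := (hiff q).mpr (Or.inr rfl)
    have hp3 := adj_enum_v hk (i+1) p hpmem.adj_sub
    have hq3 := adj_enum_v hk (i+1) q hqmem.adj_sub
    obtain ⟨d1, d2, d3⟩ := nbr_distinct_v hk (i+1)
    rw [Bp]
    rw [pind_congr (hiff (bN k (i+1))), pind_congr (hiff (bP k (i+1))),
      pind_congr (hiff (uu k (i+1)))]
    exact three_two d3 d1.symm d2.symm hpq (by tauto) (by tauto)
  · rw [pind_neg hm, Nat.mul_zero]
    rw [Bp]
    rw [pind_neg (fun h => hm (Subgraph.Adj.fst_mem h)),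
      pind_neg (fun h => hm (Subgraph.Adj.fst_mem h)),
      pind_neg (fun h => hm (Subgraph.Adj.fst_mem h))]

lemma memb_u (hk : 4 ≤ k) (hc : c.IsCycle) (i : ℕ) :
    uu k (i+1) ∈ c.toSubgraph.verts ↔
      (Tp c.toSubgraph (i+1) ∨
        (if (i % k) + 1 < k then Tp c.toSubgraph i else Bp c.toSubgraph i) ∨
        Rp c.toSubgraph (i+1)) := by
  set H := c.toSubgraph with hH
  constructor
  · intro hm
    have hx : uu k (i+1) ∈ c.support := by
      have := c.verts_toSubgraph ▸ hm
      exact this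
    obtain ⟨p, q, hpq, hiff⟩ := cycle_two_nbrs hc hx
    have hpmem : H.Adj (uu k (i+1)) p := (hiff p).mpr (Or.inl rfl)
    rcases adj_enum_u hk (i+1) p hpmem.adj_sub with h | h | h
    · right; right; rw [Rp]; rwa [h] at hpmem
    · left; rw [Tp]; rwa [h] at hpmem
    · right; left; rw [mid_iff_u hk H i]; rwa [h] at hpmem
  · rintro (h | h | h)
    · exact h.fst_mem
    · exact (Subgraph.Adj.fst_mem ((mid_iff_u hk H i).mp h))
    · exact h.fst_mem

lemma memb_v (hk : 4 ≤ k) (hc : c.IsCycle) (i : ℕ) :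
    vv k (i+1) ∈ c.toSubgraph.verts ↔
      (Bp c.toSubgraph (i+1) ∨
        (if (i % k) + 1 < k then Bp c.toSubgraph i else Tp c.toSubgraph i) ∨
        Rp c.toSubgraph (i+1)) := by
  set H := c.toSubgraph with hH
  constructor
  · intro hm
    have hx : vv k (i+1) ∈ c.support := by
      have := c.verts_toSubgraph ▸ hm
      exact this
    obtain ⟨p, q, hpq, hiff⟩ := cycle_two_nbrs hc hx
    have hpmem : H.Adj (vv k (i+1)) p := (hiff p).mpr (Or.inl rfl)
    rcases adj_enum_v hk (i+1) p hpmem.adj_sub with h | h | h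
    · right; right; rw [Rp]; rw [h] at hpmem; exact hpmem.symm
    · left; rw [Bp]; rwa [h] at hpmem
    · right; left; rw [mid_iff_v hk H i]; rwa [h] at hpmem
  · rintro (h | h | h)
    · exact h.fst_mem
    · exact (Subgraph.Adj.fst_mem ((mid_iff_v hk H i).mp h))
    · exact h.snd_mem

end CycleLocal


section CycleGlobal

variable {k : ℕ} [NeZero k] {v : Fin k ⊕ Fin k} {c : (mobiusLadder k).Walk v v}

lemma periodic_shift_sum {k : ℕ} {f : ℕ → ℕ} (hf : f k = f 0) :
    ∑ i ∈ Finset.range k, f (i+1) = ∑ i ∈ Finset.range k, f i := by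
  have h1 := Finset.sum_range_succ f k
  have h2 := Finset.sum_range_succ' f k
  omega

/-- The main parity/symmetry lemma: the vertex set of an even cycle in the Möbius
ladder (`k` even) is invariant under the top-bottom swap. -/
lemma cycle_sym (hk : 4 ≤ k) (hke : Even k) (hc : c.IsCycle) (hev : Even c.length) (m : ℕ) :
    (uu k m ∈ c.toSubgraph.verts ↔ vv k m ∈ c.toSubgraph.verts) := by
  classical
  -- parity of the boundary indicators is constant
  have hpar : ∀ i : ℕ, (pind (Tp c.toSubgraph (i+1)) + pind (Bp c.toSubgraph (i+1))) % 2
      = (pind (Tp c.toSubgraph i) + pind (Bp c.toSubgraph i)) % 2 := by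
    intro i
    have h1 := local_u hk hc i
    have h2 := local_v hk hc i
    by_cases h : (i % k) + 1 < k
    · rw [if_pos h] at h1 h2
      omega
    · rw [if_neg h] at h1 h2
      omega
  have hparchain : ∀ i : ℕ, (pind (Tp c.toSubgraph i) + pind (Bp c.toSubgraph i)) % 2
      = (pind (Tp c.toSubgraph 0) + pind (Bp c.toSubgraph 0)) % 2 := by
    intro i
    induction i with
    | zero => rfl
    | succ n ih => rw [hpar n, ih]
  by_cases hpar0 : (pind (Tp c.toSubgraph 0) + pind (Bp c.toSubgraph 0)) % 2 = 1
  · -- odd case : contradiction with evenness of the cycle length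
    exfalso
    have hlast : k - 1 + 1 = k := by omega
    -- sum of the local identities, top row
    have hsumU : ∑ i ∈ Finset.range k, (pind (Tp c.toSubgraph (i+1)) +
        pind (if (i % k) + 1 < k then Tp c.toSubgraph i else Bp c.toSubgraph i) + pind (Rp c.toSubgraph (i+1)))
        = ∑ i ∈ Finset.range k, 2 * pind (uu k (i+1) ∈ c.toSubgraph.verts) :=
      Finset.sum_congr rfl (fun i _ => local_u hk hc i)
    have hsumV : ∑ i ∈ Finset.range k, (pind (Bp c.toSubgraph (i+1)) +
        pind (if (i % k) + 1 < k then Bp c.toSubgraph i else Tp c.toSubgraph i) + pind (Rp c.toSubgraph (i+1)))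
        = ∑ i ∈ Finset.range k, 2 * pind (vv k (i+1) ∈ c.toSubgraph.verts) :=
      Finset.sum_congr rfl (fun i _ => local_v hk hc i)
    rw [Finset.sum_add_distrib, Finset.sum_add_distrib] at hsumU hsumV
    -- shift the sums using periodicity
    have hshiftT : ∑ i ∈ Finset.range k, pind (Tp c.toSubgraph (i+1))
        = ∑ i ∈ Finset.range k, pind (Tp c.toSubgraph i) :=
      periodic_shift_sum (k := k) (f := fun i => pind (Tp c.toSubgraph i))
        (by simpa using congrArg pind (Tp_add_k c.toSubgraph 0))
    have hshiftB : ∑ i ∈ Finset.range k, pind (Bp c.toSubgraph (i+1))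
        = ∑ i ∈ Finset.range k, pind (Bp c.toSubgraph i) :=
      periodic_shift_sum (k := k) (f := fun i => pind (Bp c.toSubgraph i))
        (by simpa using congrArg pind (Bp_add_k c.toSubgraph 0))
    have hshiftR : ∑ i ∈ Finset.range k, pind (Rp c.toSubgraph (i+1))
        = ∑ i ∈ Finset.range k, pind (Rp c.toSubgraph i) :=
      periodic_shift_sum (k := k) (f := fun i => pind (Rp c.toSubgraph i))
        (by simpa using congrArg pind (Rp_add_k c.toSubgraph 0))
    have hshiftU : ∑ i ∈ Finset.range k, pind (uu k (i+1) ∈ c.toSubgraph.verts)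
        = ∑ i ∈ Finset.range k, pind (uu k i ∈ c.toSubgraph.verts) :=
      periodic_shift_sum (k := k) (f := fun i => pind (uu k i ∈ c.toSubgraph.verts))
        (by simpa using congrArg (fun x => pind (x ∈ c.toSubgraph.verts)) (uu_add_k (k := k) 0))
    have hshiftV : ∑ i ∈ Finset.range k, pind (vv k (i+1) ∈ c.toSubgraph.verts)
        = ∑ i ∈ Finset.range k, pind (vv k i ∈ c.toSubgraph.verts) :=
      periodic_shift_sum (k := k) (f := fun i => pind (vv k i ∈ c.toSubgraph.verts))
        (by simpa using congrArg (fun x => pind (x ∈ c.toSubgraph.verts)) (vv_add_k (k := k) 0))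
    -- evaluate the middle sums
    have hmidT : ∑ i ∈ Finset.range k, pind (if (i % k) + 1 < k then Tp c.toSubgraph i else Bp c.toSubgraph i)
        + pind (Tp c.toSubgraph (k-1))
        = ∑ i ∈ Finset.range k, pind (Tp c.toSubgraph i) + pind (Bp c.toSubgraph (k-1)) := by
      have e1 : ∀ i ∈ Finset.range (k-1),
          pind (if (i % k) + 1 < k then Tp c.toSubgraph i else Bp c.toSubgraph i) = pind (Tp c.toSubgraph i) := by
        intro i hi
        rw [Finset.mem_range] at hi
        rw [if_pos (by rw [Nat.mod_eq_of_lt (by omega)]; omega)]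
      have e2 : pind (if ((k-1) % k) + 1 < k then Tp c.toSubgraph (k-1) else Bp c.toSubgraph (k-1))
          = pind (Bp c.toSubgraph (k-1)) := by
        rw [if_neg (by rw [Nat.mod_eq_of_lt (by omega)]; omega)]
      have h3 := Finset.sum_range_succ
        (fun i => pind (if (i % k) + 1 < k then Tp c.toSubgraph i else Bp c.toSubgraph i)) (k-1)
      have h4 := Finset.sum_range_succ (fun i => pind (Tp c.toSubgraph i)) (k-1)
      rw [hlast] at h3 h4
      rw [h3, h4, Finset.sum_congr rfl e1, e2]
      omega
    have hmidB : ∑ i ∈ Finset.range k, pind (if (i % k) + 1 < k then Bp c.toSubgraph i else Tp c.toSubgraph i)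
        + pind (Bp c.toSubgraph (k-1))
        = ∑ i ∈ Finset.range k, pind (Bp c.toSubgraph i) + pind (Tp c.toSubgraph (k-1)) := by
      have e1 : ∀ i ∈ Finset.range (k-1),
          pind (if (i % k) + 1 < k then Bp c.toSubgraph i else Tp c.toSubgraph i) = pind (Bp c.toSubgraph i) := by
        intro i hi
        rw [Finset.mem_range] at hi
        rw [if_pos (by rw [Nat.mod_eq_of_lt (by omega)]; omega)]
      have e2 : pind (if ((k-1) % k) + 1 < k then Bp c.toSubgraph (k-1) else Tp c.toSubgraph (k-1))
          = pind (Tp c.toSubgraph (k-1)) := by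
        rw [if_neg (by rw [Nat.mod_eq_of_lt (by omega)]; omega)]
      have h3 := Finset.sum_range_succ
        (fun i => pind (if (i % k) + 1 < k then Bp c.toSubgraph i else Tp c.toSubgraph i)) (k-1)
      have h4 := Finset.sum_range_succ (fun i => pind (Bp c.toSubgraph i)) (k-1)
      rw [hlast] at h3 h4
      rw [h3, h4, Finset.sum_congr rfl e1, e2]
      omega
    -- every boundary contributes exactly one edge
    have hone : ∀ i ∈ Finset.range k, pind (Tp c.toSubgraph i) + pind (Bp c.toSubgraph i) = 1 := by
      intro i _
      have h1 := hparchain i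
      have h2 := pind_le_one (Tp c.toSubgraph i)
      have h3 := pind_le_one (Bp c.toSubgraph i)
      omega
    have hsumE : ∑ i ∈ Finset.range k, (pind (Tp c.toSubgraph i) + pind (Bp c.toSubgraph i)) = k := by
      rw [Finset.sum_congr rfl hone, Finset.sum_const, Finset.card_range, smul_eq_mul,
        Nat.mul_one]
    rw [Finset.sum_add_distrib] at hsumE
    -- the length of the cycle
    have hcard : ∑ i ∈ Finset.range k, pind (uu k i ∈ c.toSubgraph.verts)
        + ∑ i ∈ Finset.range k, pind (vv k i ∈ c.toSubgraph.verts) = c.length := by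
      have hc1 : ∀ (x : Fin k ⊕ Fin k), (x ∈ c.toSubgraph.verts ↔ x ∈ c.support) := by
        intro x
        rw [c.verts_toSubgraph]
        rfl
      have huSum : ∑ i ∈ Finset.range k, pind (uu k i ∈ c.toSubgraph.verts)
          = ∑ j : Fin k, pind (Sum.inl j ∈ c.toSubgraph.verts) := by
        rw [← Fin.sum_univ_eq_sum_range (fun i => pind (uu k i ∈ c.toSubgraph.verts)) k]
        refine Finset.sum_congr rfl (fun j _ => ?_)
        have e : uu k (j : ℕ) = Sum.inl j := by
          simp [Fin.cast_val_eq_self]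
        rw [e]
      have hvSum : ∑ i ∈ Finset.range k, pind (vv k i ∈ c.toSubgraph.verts)
          = ∑ j : Fin k, pind (Sum.inr j ∈ c.toSubgraph.verts) := by
        rw [← Fin.sum_univ_eq_sum_range (fun i => pind (vv k i ∈ c.toSubgraph.verts)) k]
        refine Finset.sum_congr rfl (fun j _ => ?_)
        have e : vv k (j : ℕ) = Sum.inr j := by
          simp [Fin.cast_val_eq_self]
        rw [e]
      have hTot : ∑ x : Fin k ⊕ Fin k, pind (x ∈ c.toSubgraph.verts)
          = (∑ j : Fin k, pind (Sum.inl j ∈ c.toSubgraph.verts))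
            + ∑ j : Fin k, pind (Sum.inr j ∈ c.toSubgraph.verts) :=
        Fintype.sum_sum_type _
      have hCnt : ∑ x : Fin k ⊕ Fin k, pind (x ∈ c.toSubgraph.verts)
          = c.support.toFinset.card := by
        have e1 : ∀ x : Fin k ⊕ Fin k, pind (x ∈ c.toSubgraph.verts)
            = if x ∈ c.support.toFinset then 1 else 0 := by
          intro x
          rcases Classical.em (x ∈ c.support) with h | h
          · rw [pind_pos ((hc1 x).mpr h), if_pos (List.mem_toFinset.mpr h)]
          · rw [pind_neg (fun hh => h ((hc1 x).mp hh)),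
              if_neg (fun hh => h (List.mem_toFinset.mp hh))]
        rw [Finset.sum_congr rfl (fun x _ => e1 x), Finset.sum_boole,
          Finset.filter_univ_mem, Nat.cast_id]
      have hlen : c.support.toFinset.card = c.length := cycle_card_support hc
      rw [huSum, hvSum, ← hTot, hCnt, hlen]
    -- assemble the contradiction
    rw [← Finset.mul_sum] at hsumU hsumV
    obtain ⟨a, ha⟩ := hke
    obtain ⟨b, hb⟩ := hev
    have honeL := hone (k-1) (Finset.mem_range.mpr (by omega))
    omega
  · -- even case : top-bottom symmetry
    have hTB : ∀ i : ℕ, (Tp c.toSubgraph i ↔ Bp c.toSubgraph i) := by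
      intro i
      have h1 := hparchain i
      have h2 := pind_le_one (Tp c.toSubgraph i)
      have h3 := pind_le_one (Bp c.toSubgraph i)
      have h4 : pind (Tp c.toSubgraph i) = pind (Bp c.toSubgraph i) := by omega
      constructor
      · intro h
        exact pind_eq_one_iff.mp (by rw [← h4]; exact pind_eq_one_iff.mpr h)
      · intro h
        exact pind_eq_one_iff.mp (by rw [h4]; exact pind_eq_one_iff.mpr h)
    have key : ∀ i : ℕ, (uu k (i+1) ∈ c.toSubgraph.verts ↔ vv k (i+1) ∈ c.toSubgraph.verts) := by
      intro i
      rw [memb_u hk hc i, memb_v hk hc i]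
      by_cases h : (i % k) + 1 < k
      · rw [if_pos h, if_pos h]
        rw [show (Tp c.toSubgraph (i+1) ↔ Bp c.toSubgraph (i+1)) from hTB (i+1),
          show (Tp c.toSubgraph i ↔ Bp c.toSubgraph i) from hTB i]
      · rw [if_neg h, if_neg h]
        rw [show (Tp c.toSubgraph (i+1) ↔ Bp c.toSubgraph (i+1)) from hTB (i+1),
          show (Bp c.toSubgraph i ↔ Tp c.toSubgraph i) from (hTB i).symm]
    have hm1 : m + k = (m + k - 1) + 1 := by omega
    have := key (m + k - 1)
    rw [← hm1, uu_add_k, vv_add_k] at this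
    exact this

end CycleGlobal


/-! ### Matchings -/

section Matchings

variable {k : ℕ} [NeZero k]

lemma rung_adj (j : Fin k) : (mobiusLadder k).Adj (Sum.inl j) (Sum.inr j) := by
  rw [mobiusLadder, fromRel_adj]
  exact ⟨by simp, Or.inl (Or.inr (Or.inl ⟨j, rfl, rfl⟩))⟩

lemma hasPM_mobius : hasPM (mobiusLadder k) := by
  refine ⟨{ verts := Set.univ,
            Adj := fun a b => (∃ j : Fin k, a = Sum.inl j ∧ b = Sum.inr j) ∨
              (∃ j : Fin k, a = Sum.inr j ∧ b = Sum.inl j),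
            adj_sub := ?_, edge_vert := fun _ => Set.mem_univ _, symm := ?_ }, ?_⟩
  · rintro a b (⟨j, rfl, rfl⟩ | ⟨j, rfl, rfl⟩)
    · exact rung_adj j
    · exact (rung_adj j).symm
  · constructor
    rintro a b (⟨j, rfl, rfl⟩ | ⟨j, rfl, rfl⟩)
    · exact Or.inr ⟨j, rfl, rfl⟩
    · exact Or.inl ⟨j, rfl, rfl⟩
  · rw [Subgraph.isPerfectMatching_iff]
    intro x
    rcases x with j | j
    · refine ⟨Sum.inr j, Or.inl ⟨j, rfl, rfl⟩, ?_⟩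
      rintro y (⟨j', hj, rfl⟩ | ⟨j', hj, _⟩)
      · rw [Sum.inl.injEq] at hj
        rw [hj]
      · exact absurd hj (by simp)
    · refine ⟨Sum.inl j, Or.inr ⟨j, rfl, rfl⟩, ?_⟩
      rintro y (⟨j', hj, _⟩ | ⟨j', hj, rfl⟩)
      · exact absurd hj (by simp)
      · rw [Sum.inr.injEq] at hj
        rw [hj]

lemma hasPM_del (S : Set (Fin k ⊕ Fin k))
    (hsym : ∀ j : Fin k, (Sum.inl j ∈ S ↔ Sum.inr j ∈ S)) :
    hasPM (delVerts (mobiusLadder k) S) := by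
  refine ⟨{ verts := Set.univ,
            Adj := fun a b => (∃ j : Fin k, a.val = Sum.inl j ∧ b.val = Sum.inr j) ∨
              (∃ j : Fin k, a.val = Sum.inr j ∧ b.val = Sum.inl j),
            adj_sub := ?_, edge_vert := fun _ => Set.mem_univ _, symm := ?_ }, ?_⟩
  · rintro a b (⟨j, h1, h2⟩ | ⟨j, h1, h2⟩)
    · show (mobiusLadder k).Adj a.val b.val
      rw [h1, h2]
      exact rung_adj j
    · show (mobiusLadder k).Adj a.val b.val
      rw [h1, h2]
      exact (rung_adj j).symm
  · constructor
    rintro a b (⟨j, h1, h2⟩ | ⟨j, h1, h2⟩)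
    · exact Or.inr ⟨j, h2, h1⟩
    · exact Or.inl ⟨j, h2, h1⟩
  · rw [Subgraph.isPerfectMatching_iff]
    intro x
    rcases hx : x.val with j | j
    · have hxS : Sum.inl j ∉ S := by
        rw [← hx]
        exact x.2
      have hmem : Sum.inr j ∈ Sᶜ := fun hmm => hxS ((hsym j).mpr hmm)
      refine ⟨⟨Sum.inr j, hmem⟩, Or.inl ⟨j, hx, rfl⟩, ?_⟩
      rintro y (⟨j', h1, h2⟩ | ⟨j', h1, h2⟩)
      · rw [hx, Sum.inl.injEq] at h1
        subst h1
        exact Subtype.ext h2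
      · rw [hx] at h1
        exact absurd h1 (by simp)
    · have hxS : Sum.inr j ∉ S := by
        rw [← hx]
        exact x.2
      have hmem : Sum.inl j ∈ Sᶜ := fun hmm => hxS ((hsym j).mp hmm)
      refine ⟨⟨Sum.inl j, hmem⟩, Or.inr ⟨j, hx, rfl⟩, ?_⟩
      rintro y (⟨j', h1, h2⟩ | ⟨j', h1, h2⟩)
      · rw [hx] at h1
        exact absurd h1 (by simp)
      · rw [hx, Sum.inr.injEq] at h1
        subst h1
        exact Subtype.ext h2

end Matchings

theorem mobiusLadder_even_cycleConformal (k : ℕ) (hk : 4 ≤ k) (hke : Even k) :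
    cycleConformal (mobiusLadder k) := by
  haveI : NeZero k := ⟨by omega⟩
  constructor
  · exact hasPM_mobius
  · intro v c hc hev
    apply hasPM_del
    intro j
    have h := cycle_sym hk hke hc hev (j : ℕ)
    have e1 : uu k (j : ℕ) = Sum.inl j := by simp [Fin.cast_val_eq_self]
    have e2 : vv k (j : ℕ) = Sum.inr j := by simp [Fin.cast_val_eq_self]
    rw [e1, e2, c.verts_toSubgraph] at h
    exact h
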